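/- Let F : B ⥤ Cat be a functor and suppose each fiber category F.obj b is equipped with an orthogonal factorization system (L_b, R_b) such that for every morphism α : b → b' in B, the functor F.map α carries L_b into L_{b'} and R_b into R_{b'}. Define classes (L, R) of morphisms in the Grothendieck construction ∫F as follows: a morphism (f : b → b', φ : (F.map f).obj x → x') lies in L iff φ ∈ L_{b'}, and lies in R iff f is an isomorphism and the induced fiber morphism lies in R_{b'} (up to isomorphism). Then (L, R) is an orthogonal factorization system on ∫F. -/

import Mathlib

open CategoryTheory

universe v₁ u₁ v u

/-- An orthogonal factorization system `(L, R)` on a category `C`. -/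
structure IsOFS {C : Type u} [Category.{v} C] (L R : MorphismProperty C) : Prop where
  L_iso : ∀ {X Y : C} (f : X ⟶ Y), IsIso f → L f
  R_iso : ∀ {X Y : C} (f : X ⟶ Y), IsIso f → R f
  L_comp : ∀ {X Y Z : C} (f : X ⟶ Y) (g : Y ⟶ Z), L f → L g → L (f ≫ g)
  R_comp : ∀ {X Y Z : C} (f : X ⟶ Y) (g : Y ⟶ Z), R f → R g → R (f ≫ g)
  factor : ∀ {X Y : C} (f : X ⟶ Y),
    ∃ (Z : C) (l : X ⟶ Z) (r : Z ⟶ Y), L l ∧ R r ∧ l ≫ r = f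
  lift : ∀ {A B X Y : C} (l : A ⟶ B) (r : X ⟶ Y), L l → R r →
    ∀ (u : A ⟶ X) (v : B ⟶ Y), l ≫ v = u ≫ r →
      ∃! d : B ⟶ X, l ≫ d = u ∧ d ≫ r = v

lemma grothFiberIsIso {B : Type u} [Category.{v} B] {F : B ⥤ Cat.{v₁, u₁}}
    {X Y : Grothendieck F} (f : X ⟶ Y) [IsIso f] : IsIso f.fiber := by
  have h1 : f ≫ inv f = 𝟙 X := by simp
  have h2 : inv f ≫ f = 𝟙 Y := by simp
  have hb1 : f.base ≫ (inv f).base = 𝟙 X.base := by rw [← Grothendieck.comp_base, h1]; rfl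
  have hb2 : (inv f).base ≫ f.base = 𝟙 Y.base := by rw [← Grothendieck.comp_base, h2]; rfl
  have c1 := Grothendieck.congr h1
  have c2 := Grothendieck.congr h2
  rw [Grothendieck.comp_fiber, Grothendieck.id_fiber] at c1 c2
  have hobj : (F.map f.base).toFunctor.obj ((F.map (inv f).base).toFunctor.obj Y.fiber) = Y.fiber := by
    rw [← Cat.Hom.comp_obj, ← F.map_comp, hb2, F.map_id]; rfl
  have hobj1 : (F.map (inv f).base).toFunctor.obj ((F.map f.base).toFunctor.obj X.fiber) = X.fiber := by
    rw [← Cat.Hom.comp_obj, ← F.map_comp, hb1, F.map_id]; rfl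
  have c2' : (F.map f.base).toFunctor.map (inv f).fiber ≫ f.fiber = eqToHom hobj := by
    rw [eqToHom_comp_iff] at c2; rw [c2]; simp only [eqToHom_trans_assoc, eqToHom_trans]
  have c1' : (F.map (inv f).base).toFunctor.map f.fiber ≫ (inv f).fiber = eqToHom hobj1 := by
    rw [eqToHom_comp_iff] at c1; rw [c1]; simp only [eqToHom_trans_assoc, eqToHom_trans]
  -- section
  have hsec : (eqToHom hobj.symm ≫ (F.map f.base).toFunctor.map (inv f).fiber) ≫ f.fiber = 𝟙 Y.fiber := by
    rw [Category.assoc, c2', eqToHom_trans, eqToHom_refl]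
  -- retraction
  have hfun : F.map (inv f).base ≫ F.map f.base = 𝟙 (F.obj Y.base) := by
    rw [← F.map_comp, hb2, F.map_id]
  have hkey := Functor.congr_hom (congrArg Cat.Hom.toFunctor hfun) f.fiber
  simp only [Cat.Hom.comp_map, Cat.Hom.id_map] at hkey
  have c1'' := congrArg (fun p => (F.map f.base).toFunctor.map p) c1'
  simp only [Functor.map_comp, eqToHom_map] at c1''
  rw [hkey] at c1''
  simp only [Category.assoc, eqToHom_comp_iff] at c1''
  -- c1'' : f.fiber ≫ eqToHom _ ≫ (F.map f.base).toFunctor.map (inv f).fiber = eqToHom _ ≫ eqToHom _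
  have hret : f.fiber ≫ eqToHom hobj.symm ≫ (F.map f.base).toFunctor.map (inv f).fiber
      = 𝟙 ((F.map f.base).toFunctor.obj X.fiber) := by
    rw [c1'']; simp
  refine ⟨⟨eqToHom hobj.symm ≫ (F.map f.base).toFunctor.map (inv f).fiber, ?_, hsec⟩⟩
  exact hret

/-- Given fiberwise orthogonal factorization systems compatible with the transition functors
of `F : B ⥤ Cat`, the classes `L` (morphisms whose fiber component lies in the fiberwise
left class) and `R` (morphisms whose base component is an isomorphism and whose fiber
component lies in the fiberwise right class) form an orthogonal factorization system on the
Grothendieck construction `∫F`. -/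
theorem grothendieck_ofs_of_fiberwise_ofs
    {B : Type u} [Category.{v} B] (F : B ⥤ Cat.{v₁, u₁})
    (Lb Rb : ∀ b : B, MorphismProperty (F.obj b))
    (hfib : ∀ b : B, IsOFS (Lb b) (Rb b))
    (hL : ∀ {b b' : B} (α : b ⟶ b') {x y : F.obj b} (φ : x ⟶ y),
      Lb b φ → Lb b' ((F.map α).toFunctor.map φ))
    (hR : ∀ {b b' : B} (α : b ⟶ b') {x y : F.obj b} (φ : x ⟶ y),
      Rb b φ → Rb b' ((F.map α).toFunctor.map φ)) :
    IsOFS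
      (fun {_ Y} (φ : _ ⟶ Y) => Lb Y.base φ.fiber :
        MorphismProperty (Grothendieck F))
      (fun {_ Y} (φ : _ ⟶ Y) => IsIso φ.base ∧ Rb Y.base φ.fiber :
        MorphismProperty (Grothendieck F)) := by
  constructor
  · -- L_iso
    intro X Y f hf
    haveI := hf
    haveI := grothFiberIsIso f
    exact (hfib Y.base).L_iso f.fiber inferInstance
  · -- R_iso
    intro X Y f hf
    haveI := hf
    haveI := grothFiberIsIso f
    haveI : IsIso f.base := (Grothendieck.forget F).map_isIso f
    exact ⟨inferInstance, (hfib Y.base).R_iso f.fiber inferInstance⟩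
  · -- L_comp
    intro X Y Z f g hf hg
    rw [Grothendieck.comp_fiber]
    exact (hfib Z.base).L_comp _ _ ((hfib Z.base).L_iso _ inferInstance)
      ((hfib Z.base).L_comp _ _ (hL g.base f.fiber hf) hg)
  · -- R_comp
    intro X Y Z f g hf hg
    refine ⟨?_, ?_⟩
    · rw [Grothendieck.comp_base]
      haveI := hf.1; haveI := hg.1; infer_instance
    · rw [Grothendieck.comp_fiber]
      exact (hfib Z.base).R_comp _ _ ((hfib Z.base).R_iso _ inferInstance)
        ((hfib Z.base).R_comp _ _ (hR g.base f.fiber hf.2) hg.2)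
  · -- factor
    intro X Y f
    obtain ⟨m, l, r, hl, hr, hlr⟩ := (hfib Y.base).factor f.fiber
    refine ⟨⟨Y.base, m⟩, ⟨f.base, l⟩, ⟨𝟙 Y.base, eqToHom (by simp) ≫ r⟩, hl,
      ⟨inferInstance, (hfib Y.base).R_comp _ _ ((hfib Y.base).R_iso _ inferInstance) hr⟩, ?_⟩
    fapply Grothendieck.ext
    · simp
    · rw [Grothendieck.comp_fiber]
      have hid := Functor.congr_hom (congrArg Cat.Hom.toFunctor (F.map_id Y.base)) l
      simp only [Cat.Hom.id_map] at hid
      rw [hid]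
      simp only [Category.assoc, eqToHom_trans_assoc, eqToHom_refl, Category.id_comp, hlr]
  · -- lift
    intro P Q X Y l r hl hr u v sq
    obtain ⟨hrb, hrf⟩ := hr
    haveI := hrb
    have ff : (F.map r.base).toFunctor.FullyFaithful :=
      (Cat.equivOfIso (asIso (F.map r.base))).fullyFaithfulFunctor
    have hsqb : l.base ≫ v.base = u.base ≫ r.base := by
      rw [← Grothendieck.comp_base, sq]; rfl
    have hdb : (v.base ≫ inv r.base) ≫ r.base = v.base := by simp
    have hfun : F.map (v.base ≫ inv r.base) ≫ F.map r.base = F.map v.base := by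
      rw [← F.map_comp, Category.assoc, IsIso.inv_hom_id, Category.comp_id]
    have h1 : (F.map r.base).toFunctor.obj ((F.map (v.base ≫ inv r.base)).toFunctor.obj Q.fiber)
        = (F.map v.base).toFunctor.obj Q.fiber := by rw [← Cat.Hom.comp_obj, hfun]
    have h2 : (F.map v.base).toFunctor.obj ((F.map l.base).toFunctor.obj P.fiber)
        = (F.map r.base).toFunctor.obj ((F.map u.base).toFunctor.obj P.fiber) := by
      rw [← Cat.Hom.comp_obj, ← Cat.Hom.comp_obj, ← F.map_comp, ← F.map_comp, hsqb]
    have csq := Grothendieck.congr sq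
    rw [Grothendieck.comp_fiber, Grothendieck.comp_fiber] at csq
    have sq' : (F.map v.base).toFunctor.map l.fiber ≫ v.fiber
        = (eqToHom h2 ≫ (F.map r.base).toFunctor.map u.fiber) ≫ r.fiber := by
      rw [eqToHom_comp_iff] at csq; rw [csq]; simp only [eqToHom_trans_assoc, Category.assoc]
    obtain ⟨δ, ⟨hδ1, hδ2⟩, hδu⟩ := (hfib Y.base).lift _ r.fiber (hL v.base l.fiber hl) hrf
      (eqToHom h2 ≫ (F.map r.base).toFunctor.map u.fiber) v.fiber sq'
    have hkey := Functor.congr_hom (congrArg Cat.Hom.toFunctor hfun) l.fiber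
    simp only [Cat.Hom.comp_map] at hkey
    refine ⟨⟨v.base ≫ inv r.base, ff.preimage (eqToHom h1 ≫ δ)⟩, ⟨?_, ?_⟩, ?_⟩
    · -- l ≫ d = u
      fapply Grothendieck.ext
      · show l.base ≫ v.base ≫ inv r.base = u.base
        rw [← Category.assoc, hsqb]; simp
      · apply ff.map_injective
        rw [Grothendieck.comp_fiber]
        simp only [Functor.map_comp, eqToHom_map, ff.map_preimage, hkey]
        simp only [Category.assoc, eqToHom_trans_assoc, eqToHom_trans, eqToHom_refl,
          Category.id_comp]
        rw [hδ1]
        simp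
    · -- d ≫ r = v
      fapply Grothendieck.ext
      · exact hdb
      · rw [Grothendieck.comp_fiber]
        rw [ff.map_preimage]
        simp only [Category.assoc, eqToHom_trans_assoc, eqToHom_trans, eqToHom_refl,
          Category.id_comp]
        exact hδ2
    · -- uniqueness
      intro d₂ ⟨hA, hB⟩
      have hb2 : d₂.base ≫ r.base = v.base := by rw [← Grothendieck.comp_base, hB]
      have hbase : d₂.base = v.base ≫ inv r.base := by rw [← hb2]; simp
      have hfun2 : F.map d₂.base ≫ F.map r.base = F.map v.base := by
        rw [← F.map_comp, hb2]
      have h1' : (F.map r.base).toFunctor.obj ((F.map d₂.base).toFunctor.obj Q.fiber)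
          = (F.map v.base).toFunctor.obj Q.fiber := by rw [← Cat.Hom.comp_obj, hfun2]
      have hkey2 := Functor.congr_hom (congrArg Cat.Hom.toFunctor hfun2) l.fiber
      simp only [Cat.Hom.comp_map] at hkey2
      -- conditions for δ₂
      have cB := Grothendieck.congr hB
      rw [Grothendieck.comp_fiber] at cB
      have cond2 : (eqToHom h1'.symm ≫ (F.map r.base).toFunctor.map d₂.fiber) ≫ r.fiber = v.fiber := by
        rw [eqToHom_comp_iff] at cB
        rw [Category.assoc, cB]
        simp only [eqToHom_trans_assoc, eqToHom_refl, Category.id_comp]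
      have cA := Grothendieck.congr hA
      rw [Grothendieck.comp_fiber] at cA
      have cA' := congrArg (fun p => (F.map r.base).toFunctor.map p) cA
      simp only [Functor.map_comp, eqToHom_map, hkey2] at cA'
      simp only [Category.assoc, eqToHom_trans_assoc, eqToHom_trans, eqToHom_refl,
        Category.id_comp] at cA'
      rw [eqToHom_comp_iff] at cA'
      have cond1 : (F.map v.base).toFunctor.map l.fiber ≫ (eqToHom h1'.symm ≫ (F.map r.base).toFunctor.map d₂.fiber)
          = eqToHom h2 ≫ (F.map r.base).toFunctor.map u.fiber := by
        rw [cA']; simp only [eqToHom_trans_assoc]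
      have hδeq := hδu _ ⟨cond1, cond2⟩
      fapply Grothendieck.ext
      · exact hbase
      · apply ff.map_injective
        rw [ff.map_preimage, ← hδeq]
        simp only [Functor.map_comp, eqToHom_map]
        simp [eqToHom_trans]
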